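/- arXiv:2401.17687 — 2 statements merged into one kernel-verified Lean document; each statement's English description precedes it below -/
import Mathlib

section
/- For n ≥ 1, [n]_q! · h_n = ∑_k q^{k_1+k_2+...+k_r} ([n-1]_q!/([k_1]_q [k_2]_q ⋯ [k_{r-1}]_q · [k_r]_q!)) · [p_{n-k_1}][p_{k_1-k_2}]⋯[p_{k_{r-1}-k_r}], where the sum extends over all sequences k = (k_1,...,k_r) with r ≥ 1 and n-1 ≥ k_1 > k_2 > ... > k_{r-1} > k_r = 0. -/
/-- The q-integer `[n]_q = 1 + q + ... + q^{n-1}`. -/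
noncomputable def qInt {K : Type*} [CommRing K] (q : K) (n : ℕ) : K :=
  ∑ i ∈ Finset.range n, q ^ i

/-- The q-factorial `[n]_q!`. -/
noncomputable def qFact {K : Type*} [CommRing K] (q : K) (n : ℕ) : K :=
  ∏ i ∈ Finset.range n, qInt q (i + 1)

/-- The q-derivative `D_q F(t) = (F(qt) - F(t))/((q-1)t)`. -/
noncomputable def qDeriv {K : Type*} [CommRing K] (q : K) (F : PowerSeries K) :
    PowerSeries K :=
  PowerSeries.mk fun n => qInt q (n + 1) * PowerSeries.coeff (n + 1) F

/-- The product `[p_{n-k_1}][p_{k_1-k_2}]⋯[p_{k_{r-1}-k_r}]` over the gaps of the chain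
`0 = k_r < k_{r-1} < ... < k_1 < n`, encoded by `T = {k_1,...,k_{r-1}}`. -/
noncomputable def gapProd {K : Type*} [CommRing K] (p : ℕ → K) (n : ℕ) (T : Finset ℕ) : K :=
  (((0 :: T.sort (· ≤ ·)) ++ [n]).zip (((0 :: T.sort (· ≤ ·)) ++ [n]).tail) |>.map
    (fun ab => p (ab.2 - ab.1))).prod

section Aux

variable {K : Type*} [CommRing K]

/-- Gap product along a chain starting at `a`, through `L`, ending at `n`. -/
def gp (p : ℕ → K) : ℕ → List ℕ → ℕ → K
  | a, [], n => p (n - a)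
  | a, b :: L, n => p (b - a) * gp p b L n

lemma gp_eq (p : ℕ → K) : ∀ (L : List ℕ) (a n : ℕ),
    (((a :: L) ++ [n]).zip (((a :: L) ++ [n]).tail) |>.map
      (fun ab => p (ab.2 - ab.1))).prod = gp p a L n
  | [], a, n => by simp [gp]
  | b :: L, a, n => by
      have := gp_eq p L b n
      simp only [List.cons_append, List.zip_cons_cons, List.tail_cons, List.map_cons,
        List.prod_cons] at this ⊢
      rw [this, gp]

lemma gapProd_eq (p : ℕ → K) (n : ℕ) (T : Finset ℕ) :
    gapProd p n T = gp p 0 (T.sort (· ≤ ·)) n :=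
  gp_eq p _ 0 n

lemma gp_append (p : ℕ → K) : ∀ (L : List ℕ) (a m n : ℕ),
    gp p a (L ++ [m]) n = gp p a L m * p (n - m)
  | [], a, m, n => by simp [gp, mul_comm]
  | b :: L, a, m, n => by
      simp only [List.cons_append, gp, List.append_eq]
      rw [gp_append p L b m n, mul_assoc]

lemma sort_insert_max (T : Finset ℕ) (m : ℕ) (hT : ∀ x ∈ T, x < m) :
    (insert m T).sort (· ≤ ·) = T.sort (· ≤ ·) ++ [m] := by
  have hm : m ∉ T := fun hmem => lt_irrefl m (hT m hmem)
  refine (fun hp hs => List.Perm.eq_of_pairwise' (l₂ := T.sort (· ≤ ·) ++ [m])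
      (Finset.pairwise_sort _ _) hs hp) ((Finset.sort_perm_toList _ _).trans ?_) ?_
  · refine ((Finset.toList_insert hm).trans ?_).trans (List.perm_append_singleton _ _).symm
    exact List.Perm.cons m (Finset.sort_perm_toList _ _).symm
  · rw [List.pairwise_append]
    refine ⟨Finset.pairwise_sort _ _, List.pairwise_singleton _ m, fun a ha b hb => ?_⟩
    simp only [List.mem_singleton] at hb
    subst hb
    exact le_of_lt (hT a ((Finset.mem_sort _).mp ha))

lemma gapProd_empty (p : ℕ → K) (n : ℕ) : gapProd p n (∅ : Finset ℕ) = p n := by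
  rw [gapProd_eq, Finset.sort_empty, gp]
  simp

lemma gapProd_insert (p : ℕ → K) (n m : ℕ) (T : Finset ℕ) (hT : ∀ x ∈ T, x < m) :
    gapProd p n (insert m T) = gapProd p m T * p (n - m) := by
  rw [gapProd_eq, sort_insert_max T m hT, gp_append, gapProd_eq]

lemma qFact_succ (q : K) (m : ℕ) : qFact q (m + 1) = qFact q m * qInt q (m + 1) :=
  Finset.prod_range_succ _ _

lemma qFact_zero (q : K) : qFact q 0 = 1 := Finset.prod_range_zero _

end Aux

lemma qFact_ne_zero {K : Type*} [Field K] {q : K}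
    (hq : ∀ m : ℕ, 1 ≤ m → qInt q m ≠ 0) (n : ℕ) : qFact q n ≠ 0 :=
  Finset.prod_ne_zero_iff.mpr fun i _ => hq (i + 1) (Nat.le_add_left 1 i)

/-- Lemma 4.4: for `n ≥ 1`,
`[n]! hₙ = ∑_k q^{k_1+⋯+k_r} [n-1]!/([k_1]⋯[k_{r-1}]·[k_r]!) [p_{n-k_1}]⋯[p_{k_{r-1}-k_r}]`,
the sum over all sequences `n-1 ≥ k_1 > ... > k_{r-1} > k_r = 0`, encoded by
`T = {k_1,...,k_{r-1}} ⊆ {1,...,n-1}` (with `[k_r]! = [0]! = 1`). -/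
theorem stmt7 {K : Type*} [Field K] (q : K)
    (hq : ∀ m : ℕ, 1 ≤ m → qInt q m ≠ 0)
    (h p : ℕ → K) (hh0 : h 0 = 1)
    (hdefp : qDeriv q (PowerSeries.mk h) =
      PowerSeries.rescale q (PowerSeries.mk h) * PowerSeries.mk (fun n => p (n + 1))) :
    ∀ n : ℕ, 1 ≤ n →
      qFact q n * h n =
        ∑ T ∈ (Finset.Icc 1 (n - 1)).powerset,
          q ^ (∑ j ∈ T, j) *
            (qFact q (n - 1) / ∏ j ∈ T, qInt q j) * gapProd p n T := by
  -- the basic recurrence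
  have hrec : ∀ n : ℕ, 1 ≤ n →
      qInt q n * h n = ∑ i ∈ Finset.range n, q ^ i * h i * p (n - i) := by
    intro n hn
    obtain ⟨n', rfl⟩ : ∃ n', n = n' + 1 := ⟨n - 1, by omega⟩
    have := congrArg (PowerSeries.coeff n') hdefp
    rw [qDeriv, PowerSeries.coeff_mk, PowerSeries.coeff_mk, PowerSeries.coeff_mul] at this
    rw [this, Finset.Nat.sum_antidiagonal_eq_sum_range_succ_mk]
    refine Finset.sum_congr rfl fun i hi => ?_
    rw [Finset.mem_range] at hi
    rw [PowerSeries.coeff_rescale, PowerSeries.coeff_mk, PowerSeries.coeff_mk]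
    have : n' - i + 1 = n' + 1 - i := by omega
    rw [this]
  intro n
  induction n using Nat.strong_induction_on with
  | _ n ih =>
    intro hn
    obtain ⟨n', rfl⟩ : ∃ n', n = n' + 1 := ⟨n - 1, by omega⟩
    simp only [Nat.add_sub_cancel]
    rw [qFact_succ, mul_assoc, hrec (n' + 1) (Nat.le_add_left 1 n'), Finset.mul_sum]
    -- split off the `i = 0` term on the left
    have hsplit : Finset.range (n' + 1) = insert 0 (Finset.Icc 1 n') := by
      ext x; simp [Finset.mem_range, Finset.mem_Icc]; omega
    rw [hsplit, Finset.sum_insert (by simp)]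
    -- split off the `T = ∅` term on the right
    rw [← Finset.add_sum_erase _ _ (Finset.empty_mem_powerset _)]
    congr 1
    · simp [hh0, gapProd_empty, mul_comm]
    -- now the bijection between `i ∈ Icc 1 n'` with `T' ⊆ Icc 1 (i-1)` and nonempty `T`
    · have key : ∀ m ∈ Finset.Icc 1 n',
          qFact q n' * (q ^ m * h m * p (n' + 1 - m)) =
            ∑ T' ∈ (Finset.Icc 1 (m - 1)).powerset,
              q ^ (∑ j ∈ insert m T', j) *
                (qFact q n' / ∏ j ∈ insert m T', qInt q j) *
                gapProd p (n' + 1) (insert m T') := by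
        intro m hm
        rw [Finset.mem_Icc] at hm
        have hmlt : ∀ {T' : Finset ℕ}, T' ∈ (Finset.Icc 1 (m - 1)).powerset →
            ∀ x ∈ T', x < m := by
          intro T' hT' x hx
          have := Finset.mem_powerset.mp hT' hx
          rw [Finset.mem_Icc] at this; omega
        have hmem : ∀ {T' : Finset ℕ}, T' ∈ (Finset.Icc 1 (m - 1)).powerset → m ∉ T' :=
          fun hT' hmm => lt_irrefl m (hmlt hT' m hmm)
        have ihm := ih m (by omega) hm.1
        have hm1 : m - 1 + 1 = m := by omega
        have hhm : h m = (qFact q m)⁻¹ *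
            ∑ T' ∈ (Finset.Icc 1 (m - 1)).powerset,
              q ^ (∑ j ∈ T', j) * (qFact q (m - 1) / ∏ j ∈ T', qInt q j) *
                gapProd p m T' := by
          rw [← ihm, inv_mul_cancel_left₀ (qFact_ne_zero hq m)]
        rw [hhm]
        simp only [Finset.mul_sum, Finset.sum_mul]
        refine Finset.sum_congr rfl fun T' hT' => ?_
        rw [Finset.sum_insert (hmem hT'), Finset.prod_insert (hmem hT'),
          gapProd_insert p (n' + 1) m T' (hmlt hT'),
          pow_add]
        have hfm : qFact q m = qFact q (m - 1) * qInt q m := by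
          conv_lhs => rw [← hm1]
          rw [qFact_succ, hm1]
        have h1 : qInt q m ≠ 0 := hq m hm.1
        have h2 : (∏ j ∈ T', qInt q j) ≠ 0 :=
          Finset.prod_ne_zero_iff.mpr fun j hj => by
            have := Finset.mem_powerset.mp hT' hj
            rw [Finset.mem_Icc] at this
            exact hq j this.1
        have h3 : qFact q (m - 1) ≠ 0 := qFact_ne_zero hq _
        field_simp [hfm]
        rw [hfm]
        ring
      rw [Finset.sum_congr rfl key]
      -- reindex
      rw [Finset.sum_sigma']
      refine Finset.sum_nbij' (i := fun x => insert x.1 x.2)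
        (j := fun T => if hT : T.Nonempty then ⟨T.max' hT, T.erase (T.max' hT)⟩ else ⟨0, ∅⟩)
        ?_ ?_ ?_ ?_ ?_
      · rintro ⟨m, T'⟩ hx
        simp only [Finset.mem_sigma, Finset.mem_Icc, Finset.mem_powerset] at hx
        obtain ⟨hm, hT'⟩ := hx
        rw [Finset.mem_erase]
        constructor
        · exact Finset.insert_ne_empty _ _
        · rw [Finset.mem_powerset, Finset.insert_subset_iff]
          refine ⟨Finset.mem_Icc.mpr hm, hT'.trans ?_⟩
          intro x hx
          rw [Finset.mem_Icc] at hx ⊢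
          omega
      · intro T hT
        rw [Finset.mem_erase, Finset.mem_powerset] at hT
        obtain ⟨hne, hsub⟩ := hT
        have hT : T.Nonempty := Finset.nonempty_iff_ne_empty.mpr hne
        rw [dif_pos hT]
        have hmax := T.max'_mem hT
        have hmaxIcc := Finset.mem_Icc.mp (hsub hmax)
        simp only [Finset.mem_sigma, Finset.mem_Icc, Finset.mem_powerset]
        refine ⟨hmaxIcc, fun x hx => ?_⟩
        rw [Finset.mem_erase] at hx
        have hxle := T.le_max' x hx.2
        have := Finset.mem_Icc.mp (hsub hx.2)
        rw [Finset.mem_Icc]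
        omega
      · rintro ⟨m, T'⟩ hx
        simp only [Finset.mem_sigma, Finset.mem_Icc, Finset.mem_powerset] at hx
        obtain ⟨hm, hT'⟩ := hx
        have hmnot : m ∉ T' := by
          intro hmm
          have := Finset.mem_Icc.mp (hT' hmm); omega
        have hne : (insert m T').Nonempty := Finset.insert_nonempty _ _
        dsimp only
        rw [dif_pos hne]
        have hmax : (insert m T').max' hne = m := by
          refine le_antisymm (Finset.max'_le _ _ _ fun y hy => ?_)
            (Finset.le_max' _ _ (Finset.mem_insert_self _ _))
          rcases Finset.mem_insert.mp hy with rfl | hy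
          · exact le_rfl
          · have := Finset.mem_Icc.mp (hT' hy); omega
        simp only [hmax, Finset.erase_insert hmnot]
      · intro T hT
        rw [Finset.mem_erase, Finset.mem_powerset] at hT
        have hne : T.Nonempty := Finset.nonempty_iff_ne_empty.mpr hT.1
        rw [dif_pos hne]
        exact Finset.insert_erase (T.max'_mem hne)
      · rintro ⟨m, T'⟩ _
        rfl
end

section
/- For n ≥ 1, h_n = ∑_{|λ|=n} (q^{|λ|-ℓ(λ)} [z_λ]_{q^{-1}})^{-1} [p_λ]_q, where ([z_λ]_{q^{-1}})^{-1} = ∑_u ([n]_{q^{-1}} [n-u_1]_{q^{-1}} ⋯ [u_r]_{q^{-1}})^{-1}, the sum over all distinct permutations u of the parts of λ. -/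
/-- Finset of compositions of `n` as lists of positive naturals. -/
def comps : ℕ → Finset (List ℕ)
  | 0 => {[]}
  | (n+1) => (Finset.range (n+1)).attach.biUnion fun k =>
      (comps k.1).image (List.cons (n+1-k.1))
  decreasing_by exact Finset.mem_range.mp k.2

lemma mem_comps : ∀ (n : ℕ) (l : List ℕ), l ∈ comps n ↔ l.sum = n ∧ ∀ x ∈ l, 0 < x := by
  intro n
  induction n using Nat.strong_induction_on with
  | _ n ih =>
    intro l
    match n with
    | 0 =>
      simp only [comps, Finset.mem_singleton]
      constructor
      · rintro rfl; simp
      · rintro ⟨hs, hp⟩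
        cases l with
        | nil => rfl
        | cons a t =>
          exfalso
          have := hp a (by simp)
          simp at hs; omega
    | (m+1) =>
      simp only [comps, Finset.mem_biUnion, Finset.mem_attach, Finset.mem_image, true_and,
        Subtype.exists, Finset.mem_range]
      constructor
      · rintro ⟨k, hk, t, ht, rfl⟩
        rw [ih k hk] at ht
        refine ⟨by simp only [List.sum_cons, ht.1]; omega, ?_⟩
        intro x hx
        rcases List.mem_cons.mp hx with rfl | hx
        · omega
        · exact ht.2 x hx
      · rintro ⟨hs, hp⟩
        cases l with
        | nil => simp at hs
        | cons a t =>
          have ha : 0 < a := hp a (by simp)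
          simp only [List.sum_cons] at hs
          refine ⟨t.sum, by omega, t, ?_, by rw [show m + 1 - t.sum = a by omega]⟩
          rw [ih t.sum (by omega)]
          exact ⟨rfl, fun x hx => hp x (List.mem_cons_of_mem _ hx)⟩

lemma length_le_sum {l : List ℕ} (hp : ∀ x ∈ l, 0 < x) : l.length ≤ l.sum := by
  induction l with
  | nil => simp
  | cons a t ih =>
    have := hp a (by simp)
    have := ih (fun x hx => hp x (List.mem_cons_of_mem _ hx))
    simp only [List.length_cons, List.sum_cons]
    omega

section Field
variable {K : Type*} [Field K]

lemma qInt_inv_eq (q : K) (hq0 : q ≠ 0) (m : ℕ) :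
    qInt q⁻¹ (m+1) = (q ^ m)⁻¹ * qInt q (m+1) := by
  have : q ^ m * qInt q⁻¹ (m+1) = qInt q (m+1) := by
    unfold qInt
    rw [Finset.mul_sum]
    rw [← Finset.sum_range_reflect (fun i => q ^ i) (m+1)]
    refine Finset.sum_congr rfl fun i hi => ?_
    rw [Finset.mem_range] at hi
    rw [inv_pow, show m + 1 - 1 - i = m - i by omega,
      pow_sub₀ q hq0 (by omega : i ≤ m)]
  field_simp at this ⊢
  linear_combination this

/-- The summand for a composition `l` of `n`. -/
noncomputable def fterm (q : K) (p : ℕ → K) (n : ℕ) (l : List ℕ) : K :=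
  (q ^ (n - l.length))⁻¹ *
    (∏ i ∈ Finset.range l.length, qInt q⁻¹ (n - (l.take i).sum))⁻¹ * (l.map p).prod

lemma fterm_cons (q : K) (p : ℕ → K) {m k : ℕ} (hk : k ≤ m) {l : List ℕ}
    (hsum : l.sum = k) (hlen : l.length ≤ k) :
    fterm q p (m+1) ((m+1-k) :: l)
      = (q ^ (m-k))⁻¹ * (qInt q⁻¹ (m+1))⁻¹ * p (m+1-k) * fterm q p k l := by
  unfold fterm
  have hprod : ∏ i ∈ Finset.range (l.length + 1),
      qInt q⁻¹ (m+1 - ((((m+1-k) :: l)).take i).sum)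
      = (∏ i ∈ Finset.range l.length, qInt q⁻¹ (k - (l.take i).sum)) * qInt q⁻¹ (m+1) := by
    rw [Finset.prod_range_succ' (fun i => qInt q⁻¹ (m+1 - ((((m+1-k) :: l)).take i).sum))]
    have h0 : (((m+1-k) :: l).take 0).sum = 0 := rfl
    rw [h0, Nat.sub_zero]
    congr 1
    refine Finset.prod_congr rfl fun i _ => ?_
    have hts : (l.take i).sum ≤ k := hsum ▸ (l.take_sublist i).sum_le_sum (fun _ _ => Nat.zero_le _)
    simp only [List.take_succ_cons, List.sum_cons]
    congr 1
    omega
  have hpow : (m+1) - (l.length + 1) = (m - k) + (k - l.length) := by omega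
  simp only [List.length_cons, List.map_cons, List.prod_cons, hprod, hpow, pow_add, mul_inv]
  ring

lemma comps_sum_rec (q : K) (p : ℕ → K) (m : ℕ) :
    ∑ l ∈ comps (m+1), fterm q p (m+1) l
      = ∑ k ∈ Finset.range (m+1),
          (q ^ (m-k))⁻¹ * (qInt q⁻¹ (m+1))⁻¹ * p (m+1-k) *
            ∑ l ∈ comps k, fterm q p k l := by
  rw [comps, Finset.sum_biUnion]
  · rw [← Finset.sum_attach (Finset.range (m+1)) (fun k =>
      (q ^ (m-k))⁻¹ * (qInt q⁻¹ (m+1))⁻¹ * p (m+1-k) * ∑ l ∈ comps k, fterm q p k l)]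
    refine Finset.sum_congr rfl fun k _ => ?_
    rw [Finset.sum_image (fun a _ b _ hab => List.cons_injective hab)]
    rw [Finset.mul_sum]
    refine Finset.sum_congr rfl fun l hl => ?_
    rw [mem_comps] at hl
    have hk : k.1 ≤ m := by have := Finset.mem_range.mp k.2; omega
    exact fterm_cons q p hk hl.1 (hl.1 ▸ length_le_sum hl.2)
  · intro a _ b _ hab
    simp only [Function.onFun]
    rw [Finset.disjoint_left]
    rintro x hxa hxb
    obtain ⟨la, _, rfl⟩ := Finset.mem_image.mp hxa
    obtain ⟨lb, _, hx⟩ := Finset.mem_image.mp hxb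
    have ha := Finset.mem_range.mp a.2
    have hb := Finset.mem_range.mp b.2
    have : m + 1 - b.1 = m + 1 - a.1 := (List.cons.injEq _ _ _ _ ▸ hx).1
    exact hab (Subtype.ext (by omega)).symm

lemma key (q : K) (hq0 : q ≠ 0) (hq : ∀ m : ℕ, 1 ≤ m → qInt q m ≠ 0)
    (h p : ℕ → K) (hh0 : h 0 = 1)
    (hrec : ∀ m : ℕ, qInt q (m+1) * h (m+1)
      = ∑ k ∈ Finset.range (m+1), q ^ k * h k * p (m+1-k)) :
    ∀ n, h n = ∑ l ∈ comps n, fterm q p n l := by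
  intro n
  induction n using Nat.strong_induction_on with
  | _ n ih =>
    match n with
    | 0 => simp [comps, fterm, hh0]
    | (m+1) =>
      rw [comps_sum_rec]
      have hQ : qInt q (m+1) ≠ 0 := hq (m+1) (by omega)
      have hrw : ∀ k ∈ Finset.range (m+1),
          (q ^ (m-k))⁻¹ * (qInt q⁻¹ (m+1))⁻¹ * p (m+1-k) * ∑ l ∈ comps k, fterm q p k l
          = (qInt q (m+1))⁻¹ * (q ^ k * h k * p (m+1-k)) := by
        intro k hk
        rw [Finset.mem_range] at hk
        rw [← ih k (by omega), qInt_inv_eq q hq0, mul_inv, inv_inv]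
        have : (q ^ (m-k))⁻¹ * q ^ m = q ^ k := by
          rw [pow_sub₀ q hq0 (by omega : k ≤ m)]
          field_simp
        linear_combination ((qInt q (m+1))⁻¹ * p (m+1-k) * h k) * this
      rw [Finset.sum_congr rfl hrw, ← Finset.mul_sum, ← hrec m,
        inv_mul_cancel_left₀ hQ]
end Field

section F2
variable {K : Type*} [Field K]

lemma partition_sum_eq (q : K) (p : ℕ → K) (n : ℕ) :
    (∑ μ : Nat.Partition n,
        (q ^ (n - Multiset.card μ.parts))⁻¹ *
          (∑ u ∈ μ.parts.toList.permutations.toFinset,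
            (∏ i ∈ Finset.range u.length, qInt q⁻¹ (n - (u.take i).sum))⁻¹) *
          (μ.parts.map p).prod)
      = ∑ l ∈ comps n, fterm q p n l := by
  classical
  have step1 : ∀ μ : Nat.Partition n,
      (q ^ (n - Multiset.card μ.parts))⁻¹ *
          (∑ u ∈ μ.parts.toList.permutations.toFinset,
            (∏ i ∈ Finset.range u.length, qInt q⁻¹ (n - (u.take i).sum))⁻¹) *
          (μ.parts.map p).prod
        = ∑ u ∈ μ.parts.toList.permutations.toFinset, fterm q p n u := by
    intro μ
    rw [Finset.mul_sum, Finset.sum_mul]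
    refine Finset.sum_congr rfl fun u hu => ?_
    rw [List.mem_toFinset, List.mem_permutations] at hu
    unfold fterm
    rw [hu.length_eq, Multiset.length_toList]
    congr 1
    conv_lhs => rw [← Multiset.coe_toList μ.parts]
    rw [Multiset.map_coe, Multiset.prod_coe]
    exact ((hu.map p).prod_eq).symm
  rw [Finset.sum_congr rfl (fun μ _ => step1 μ), Finset.sum_sigma']
  refine Finset.sum_bij' (fun x _ => x.2)
    (fun l hl => ⟨⟨(l : Multiset ℕ),
      fun {i} hi => ((mem_comps n l).mp hl).2 i (by simpa using hi),
      by simpa using ((mem_comps n l).mp hl).1⟩, l⟩) ?_ ?_ ?_ ?_ ?_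
  · rintro ⟨μ, u⟩ ha
    rw [Finset.mem_sigma] at ha
    have hu := List.mem_permutations.mp (List.mem_toFinset.mp ha.2)
    rw [mem_comps]
    constructor
    · rw [hu.sum_eq]
      have : (μ.parts.toList : Multiset ℕ).sum = μ.parts.sum := by
        rw [Multiset.coe_toList]
      simpa [Multiset.sum_coe] using this.trans μ.parts_sum
    · intro x hx
      exact μ.parts_pos (by
        have : x ∈ μ.parts.toList := hu.mem_iff.mp hx
        rwa [Multiset.mem_toList] at this)
  · rintro l hl
    rw [Finset.mem_sigma]
    refine ⟨Finset.mem_univ _, ?_⟩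
    rw [List.mem_toFinset, List.mem_permutations]
    exact (Multiset.coe_eq_coe.mp (Multiset.coe_toList (l : Multiset ℕ))).symm
  · rintro ⟨μ, u⟩ ha
    rw [Finset.mem_sigma] at ha
    have hu := List.mem_permutations.mp (List.mem_toFinset.mp ha.2)
    have hμ : (u : Multiset ℕ) = μ.parts := by
      rw [Multiset.coe_eq_coe.mpr hu, Multiset.coe_toList]
    exact Sigma.ext (Nat.Partition.ext hμ) (heq_of_eq rfl)
  · rintro l hl
    rfl
  · rintro ⟨μ, u⟩ _
    rfl

end F2

/-- Theorem 4.5: for `n ≥ 1`, `hₙ = ∑_{|λ|=n} (q^{|λ|-ℓ(λ)}[z_λ]_{q⁻¹})⁻¹ [p_λ]`, where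
`([z_λ]_{q⁻¹})⁻¹ = ∑_u ([n]_{q⁻¹}[n-u₁]_{q⁻¹}⋯[u_r]_{q⁻¹})⁻¹`, the inner sum over
all distinct permutations `u` of the parts of `λ`, and `[pₙ]` is defined by
`∑_{n≥1}[pₙ]t^{n-1} = D_q H(t)/H(qt)`. -/
theorem stmt8 {K : Type*} [Field K] (q : K) (hq0 : q ≠ 0)
    (hq : ∀ m : ℕ, 1 ≤ m → qInt q m ≠ 0)
    (h p : ℕ → K) (hh0 : h 0 = 1)
    (hdefp : qDeriv q (PowerSeries.mk h) =
      PowerSeries.rescale q (PowerSeries.mk h) * PowerSeries.mk (fun n => p (n + 1))) :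
    ∀ n : ℕ, 1 ≤ n →
      h n = ∑ μ : Nat.Partition n,
        (q ^ (n - Multiset.card μ.parts))⁻¹ *
          (∑ u ∈ μ.parts.toList.permutations.toFinset,
            (∏ i ∈ Finset.range u.length, qInt q⁻¹ (n - (u.take i).sum))⁻¹) *
          (μ.parts.map p).prod := by
  have hrec : ∀ m : ℕ, qInt q (m+1) * h (m+1)
      = ∑ k ∈ Finset.range (m+1), q ^ k * h k * p (m+1-k) := by
    intro m
    have hc := congrArg (PowerSeries.coeff m) hdefp
    rw [PowerSeries.coeff_mul] at hc
    simp only [qDeriv, PowerSeries.coeff_mk, PowerSeries.coeff_rescale] at hc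
    rw [hc, Finset.Nat.sum_antidiagonal_eq_sum_range_succ_mk]
    refine Finset.sum_congr rfl fun k hk => ?_
    rw [Finset.mem_range] at hk
    rw [show m - k + 1 = m + 1 - k by omega]
  intro n hn
  rw [partition_sum_eq]
  exact key q hq0 hq h p hh0 hrec n
end
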